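/- arXiv:1808.02218 — 2 statements merged into one kernel-verified Lean document; each statement's English description precedes it below -/
import Mathlib

section
/- Let α > 2 and β = α/(α−1), so that 1/α + 1/β = 1. Then there is a constant C(α) such that for all a_1 ≥ a_2 > 0, (∫_0^{π/2} (a_1 cos θ + a_2 sin θ)^{−β} dθ)^{1/β} · (∫_0^{π/2} (a_2^{−1} cos θ + a_1^{−1} sin θ)^{−α} dθ)^{1/α} ≤ C(α). -/
open Real MeasureTheory

lemma lin_int_bound (p a b : ℝ) (hp : 1 < p) (hb : 0 < b) (hba : b < a) :
    ∫ θ in Set.Icc (0:ℝ) (π/2), (a + (b-a)*((2/π)*θ)) ^ (-p)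
      ≤ (π/2) * b^(1-p) / ((p-1)*(a-b)) := by
  have hπ : (0:ℝ) < π := pi_pos
  have hc : (b-a)*(2/π) ≠ 0 :=
    mul_ne_zero (by linarith) (by positivity)
  have key : ∫ θ in Set.Icc (0:ℝ) (π/2), (a + (b-a)*((2/π)*θ)) ^ (-p)
      = (π/2) * (b^(1-p) - a^(1-p)) / ((1-p)*(b-a)) := by
    rw [integral_Icc_eq_integral_Ioc, ← intervalIntegral.integral_of_le (by positivity)]
    have : ∀ θ : ℝ, a + (b-a)*((2/π)*θ) = ((b-a)*(2/π))*θ + a := by intro θ; ring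
    simp_rw [this]
    rw [intervalIntegral.integral_comp_mul_add (f := fun x => x ^ (-p)) hc a]
    have h1 : (b-a)*(2/π) * 0 + a = a := by ring
    have h2 : (b-a)*(2/π) * (π/2) + a = b := by field_simp; ring
    rw [h1, h2, integral_rpow]
    · have h3 : -p + 1 = 1 - p := by ring
      rw [h3, smul_eq_mul]
      field_simp
    · right
      refine ⟨by intro h; linarith, ?_⟩
      intro h
      rcases Set.mem_uIcc.mp h with ⟨h1, _⟩ | ⟨h1, _⟩ <;> linarith
  rw [key]
  have hnum : 0 ≤ a ^ (1-p) := Real.rpow_nonneg (by linarith) _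
  have hd : (1-p)*(b-a) = (p-1)*(a-b) := by ring
  rw [hd]
  have hden : 0 < (p-1)*(a-b) := mul_pos (by linarith) (by linarith)
  gcongr
  linarith

lemma trig_int_bound (p a b : ℝ) (hp : 0 < p) (hb : 0 < b) (hba : b ≤ a) :
    ∫ θ in Set.Icc (0:ℝ) (π/2), (a * Real.cos θ + b * Real.sin θ) ^ (-p)
      ≤ ∫ θ in Set.Icc (0:ℝ) (π/2), (a + (b-a)*((2/π)*θ)) ^ (-p) := by
  have hπ : (0:ℝ) < π := pi_pos
  have ha : 0 < a := lt_of_lt_of_le hb hba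
  have hlin : ∀ θ ∈ Set.Icc (0:ℝ) (π/2), 0 < a + (b-a)*((2/π)*θ) := by
    intro θ ⟨h1, h2⟩
    have h3 : (2/π)*θ ≤ 1 := by
      rw [div_mul_eq_mul_div, div_le_one hπ]; linarith
    have h4 : 0 ≤ (2/π)*θ := by positivity
    nlinarith
  apply integral_mono_of_nonneg
  · filter_upwards [ae_restrict_mem measurableSet_Icc] with θ hθ
    have h1 := Real.cos_nonneg_of_mem_Icc (Set.Icc_subset_Icc (by linarith) le_rfl hθ)
    have h2 := Real.sin_nonneg_of_nonneg_of_le_pi hθ.1 (by linarith [hθ.2])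
    exact Real.rpow_nonneg (add_nonneg (by positivity) (by positivity)) _
  · apply ContinuousOn.integrableOn_Icc
    apply ContinuousOn.rpow_const
    · fun_prop
    · intro θ hθ; exact Or.inl (hlin θ hθ).ne'
  · filter_upwards [ae_restrict_mem measurableSet_Icc] with θ hθ
    apply Real.rpow_le_rpow_of_nonpos (hlin θ hθ) _ (by linarith)
    have hsin := Real.mul_le_sin hθ.1 hθ.2
    have hcos := Real.one_sub_mul_le_cos hθ.1 hθ.2
    nlinarith [mul_le_mul_of_nonneg_left hsin hb.le, mul_le_mul_of_nonneg_left hcos ha.le]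

lemma triv_bound (p a b : ℝ) (hp : 0 < p) (hb : 0 < b) (hba : b ≤ a) :
    ∫ θ in Set.Icc (0:ℝ) (π/2), (a * Real.cos θ + b * Real.sin θ) ^ (-p)
      ≤ (π/2) * b ^ (-p) := by
  have hπ : (0:ℝ) < π := pi_pos
  have key : ∫ θ in Set.Icc (0:ℝ) (π/2), b ^ (-p) ∂volume = (π/2) * b ^ (-p) := by
    rw [setIntegral_const, Real.volume_real_Icc_of_le (by linarith), smul_eq_mul]
    ring_nf
  calc ∫ θ in Set.Icc (0:ℝ) (π/2), (a * Real.cos θ + b * Real.sin θ) ^ (-p)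
      ≤ ∫ θ in Set.Icc (0:ℝ) (π/2), b ^ (-p) ∂volume := by
        apply integral_mono_of_nonneg
        · filter_upwards [ae_restrict_mem measurableSet_Icc] with θ hθ
          have h1 := Real.cos_nonneg_of_mem_Icc (Set.Icc_subset_Icc (by linarith) le_rfl hθ)
          have h2 := Real.sin_nonneg_of_nonneg_of_le_pi hθ.1 (by linarith [hθ.2])
          have ha : (0:ℝ) < a := hb.trans_le hba
          exact Real.rpow_nonneg (add_nonneg (by positivity) (by positivity)) _
        · exact integrableOn_const (by rw [Real.volume_Icc]; exact ENNReal.ofReal_ne_top)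
        · filter_upwards [ae_restrict_mem measurableSet_Icc] with θ hθ
          have h1 := Real.cos_nonneg_of_mem_Icc (Set.Icc_subset_Icc (by linarith) le_rfl hθ)
          have h2 := Real.sin_nonneg_of_nonneg_of_le_pi hθ.1 (by linarith [hθ.2])
          apply Real.rpow_le_rpow_of_nonpos hb _ (by linarith)
          have hcs : 1 ≤ Real.cos θ + Real.sin θ := by
            nlinarith [Real.sin_sq_add_cos_sq θ,
              mul_nonneg h2 (sub_nonneg.2 (Real.sin_le_one θ)),
              mul_nonneg h1 (sub_nonneg.2 (Real.cos_le_one θ))]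
          nlinarith [mul_nonneg (sub_nonneg.2 hba) h1,
            mul_le_mul_of_nonneg_left hcs hb.le]
    _ = (π/2) * b ^ (-p) := key

lemma int_nonneg (p a b : ℝ) (ha : 0 ≤ a) (hb : 0 ≤ b) :
    0 ≤ ∫ θ in Set.Icc (0:ℝ) (π/2), (a * Real.cos θ + b * Real.sin θ) ^ (-p) := by
  have hπ : (0:ℝ) < π := pi_pos
  apply setIntegral_nonneg measurableSet_Icc
  intro θ hθ
  have h1 := Real.cos_nonneg_of_mem_Icc (Set.Icc_subset_Icc (by linarith) le_rfl hθ)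
  have h2 := Real.sin_nonneg_of_nonneg_of_le_pi hθ.1 (by linarith [hθ.2])
  exact Real.rpow_nonneg (add_nonneg (by positivity) (by positivity)) _

lemma case1_alg (α β p a₁ a₂ : ℝ) (hα : 0 < α) (hβ : 0 < β) (hsum : 1/α + 1/β = 1)
    (hp : 0 < p) (h1 : 0 < a₁) (h2 : 0 < a₂) :
    (p * a₂ ^ (-β)) ^ (1/β) * (p * (a₁⁻¹) ^ (-α)) ^ (1/α) = p * (a₁ * a₂⁻¹) := by
  have h5 : β * (1/β) = 1 := by field_simp
  have h6 : α * (1/α) = 1 := by field_simp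
  obtain ⟨c, rfl⟩ : ∃ c, p = Real.exp c := ⟨Real.log p, (Real.exp_log hp).symm⟩
  obtain ⟨u, rfl⟩ : ∃ u, a₂ = Real.exp u := ⟨Real.log a₂, (Real.exp_log h2).symm⟩
  obtain ⟨v, rfl⟩ : ∃ v, a₁ = Real.exp v := ⟨Real.log a₁, (Real.exp_log h1).symm⟩
  simp only [← Real.exp_neg, ← Real.exp_add, Real.rpow_def_of_pos (Real.exp_pos _),
    Real.log_exp, Real.exp_eq_exp]
  linear_combination c * hsum - u * h5 + v * h6

lemma case2_alg (α β cβ cα a₁ a₂ s : ℝ) (hα : 0 < α) (hβ : 0 < β) (hsum : 1/α + 1/β = 1)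
    (hcβ : 0 < cβ) (hcα : 0 < cα) (h1 : 0 < a₁) (h2 : 0 < a₂) (hs : 0 < s) :
    (cβ * (a₂ ^ (1-β) * s⁻¹)) ^ (1/β) * (cα * (a₁ ^ (α-1) * a₁ * a₂ * s⁻¹)) ^ (1/α)
      = cβ ^ (1/β) * cα ^ (1/α) * (a₁ * s⁻¹) := by
  have h5 : β * (1/β) = 1 := by field_simp
  have h6 : α * (1/α) = 1 := by field_simp
  obtain ⟨c, rfl⟩ : ∃ c, cβ = Real.exp c := ⟨Real.log cβ, (Real.exp_log hcβ).symm⟩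
  obtain ⟨d, rfl⟩ : ∃ d, cα = Real.exp d := ⟨Real.log cα, (Real.exp_log hcα).symm⟩
  obtain ⟨u, rfl⟩ : ∃ u, a₂ = Real.exp u := ⟨Real.log a₂, (Real.exp_log h2).symm⟩
  obtain ⟨v, rfl⟩ : ∃ v, a₁ = Real.exp v := ⟨Real.log a₁, (Real.exp_log h1).symm⟩
  obtain ⟨w, rfl⟩ : ∃ w, s = Real.exp w := ⟨Real.log s, (Real.exp_log hs).symm⟩
  simp only [← Real.exp_neg, ← Real.exp_add, Real.rpow_def_of_pos (Real.exp_pos _),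
    Real.log_exp, Real.exp_eq_exp]
  linear_combination (u - w) * hsum - u * h5 + v * h6

/-- The two-dimensional (`n = 1`) case of the generalised Blaschke–Santaló inequality
for rhombi: for `α > 2` and `β = α/(α-1)` (so `1/α + 1/β = 1`), the product of the
normalised integrals is bounded by a constant depending only on `α`. -/
theorem two_dim_blaschke_santalo_rhombus (α : ℝ) (hα : 2 < α) :
    ∃ C : ℝ, ∀ a₁ a₂ : ℝ, 0 < a₂ → a₂ ≤ a₁ →
      (∫ θ in Set.Icc 0 (π/2),
          (a₁ * Real.cos θ + a₂ * Real.sin θ) ^ (-(α/(α-1)))) ^ (1/(α/(α-1))) *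
      (∫ θ in Set.Icc 0 (π/2),
          (a₂⁻¹ * Real.cos θ + a₁⁻¹ * Real.sin θ) ^ (-α)) ^ (1/α) ≤ C := by
  have hπ : (0:ℝ) < π := pi_pos
  set β := α/(α-1) with hβdef
  have hα1 : (0:ℝ) < α - 1 := by linarith
  have hα0 : (0:ℝ) < α := by linarith
  have hβ1 : 1 < β := by rw [hβdef, lt_div_iff₀ hα1]; linarith
  have hβ0 : 0 < β := by linarith
  have hsum : 1/α + 1/β = 1 := by rw [hβdef]; field_simp; ring
  refine ⟨max π (2 * (((π/2)/(β-1)) ^ (1/β) * ((π/2)/(α-1)) ^ (1/α))), ?_⟩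
  intro a₁ a₂ h2 h12
  have ha1 : 0 < a₁ := lt_of_lt_of_le h2 h12
  have hX0 := int_nonneg β a₁ a₂ ha1.le h2.le
  have hY0 := int_nonneg α a₂⁻¹ a₁⁻¹ (by positivity) (by positivity)
  have hinv : a₁⁻¹ ≤ a₂⁻¹ := by gcongr
  rcases le_or_gt a₁ (2*a₂) with hc | hc
  · -- a₁ ≤ 2 a₂ : trivial bounds suffice
    have hX := triv_bound β a₁ a₂ hβ0 h2 h12
    have hY := triv_bound α a₂⁻¹ a₁⁻¹ hα0 (by positivity) hinv
    calc (∫ θ in Set.Icc 0 (π/2), (a₁ * Real.cos θ + a₂ * Real.sin θ) ^ (-β)) ^ (1/β) *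
          (∫ θ in Set.Icc 0 (π/2), (a₂⁻¹ * Real.cos θ + a₁⁻¹ * Real.sin θ) ^ (-α)) ^ (1/α)
        ≤ ((π/2) * a₂ ^ (-β)) ^ (1/β) * ((π/2) * (a₁⁻¹) ^ (-α)) ^ (1/α) := by
          apply mul_le_mul (Real.rpow_le_rpow hX0 hX (by positivity))
            (Real.rpow_le_rpow hY0 hY (by positivity))
            (Real.rpow_nonneg hY0 _) (Real.rpow_nonneg (by positivity) _)
      _ = (π/2) * (a₁ * a₂⁻¹) := case1_alg α β (π/2) a₁ a₂ hα0 hβ0 hsum (by positivity) ha1 h2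
      _ ≤ π := by
          have h7 : a₁ * a₂⁻¹ ≤ 2 := by
            rw [mul_inv_le_iff₀ h2]; linarith
          nlinarith
      _ ≤ _ := le_max_left _ _
  · -- 2 a₂ < a₁ : sharp bounds
    have h21 : a₂ < a₁ := by linarith
    have hs : 0 < a₁ - a₂ := by linarith
    have hinv' : a₁⁻¹ < a₂⁻¹ := by gcongr
    have hβm : 0 < β - 1 := by linarith
    have hX : (∫ θ in Set.Icc 0 (π/2), (a₁ * Real.cos θ + a₂ * Real.sin θ) ^ (-β))
        ≤ ((π/2)/(β-1)) * (a₂ ^ (1-β) * (a₁-a₂)⁻¹) := by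
      refine ((trig_int_bound β a₁ a₂ hβ0 h2 h12).trans
        (lin_int_bound β a₁ a₂ hβ1 h2 h21)).trans_eq ?_
      field_simp
    have hY : (∫ θ in Set.Icc 0 (π/2), (a₂⁻¹ * Real.cos θ + a₁⁻¹ * Real.sin θ) ^ (-α))
        ≤ ((π/2)/(α-1)) * (a₁ ^ (α-1) * a₁ * a₂ * (a₁-a₂)⁻¹) := by
      refine ((trig_int_bound α a₂⁻¹ a₁⁻¹ hα0 (by positivity) hinv).trans
        (lin_int_bound α a₂⁻¹ a₁⁻¹ (by linarith) (by positivity) hinv')).trans_eq ?_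
      rw [Real.inv_rpow ha1.le, ← Real.rpow_neg ha1.le, (show -(1-α) = α-1 by ring)]
      have hne : a₂⁻¹ - a₁⁻¹ ≠ 0 := (sub_pos.mpr hinv').ne'
      field_simp
    calc (∫ θ in Set.Icc 0 (π/2), (a₁ * Real.cos θ + a₂ * Real.sin θ) ^ (-β)) ^ (1/β) *
          (∫ θ in Set.Icc 0 (π/2), (a₂⁻¹ * Real.cos θ + a₁⁻¹ * Real.sin θ) ^ (-α)) ^ (1/α)
        ≤ (((π/2)/(β-1)) * (a₂ ^ (1-β) * (a₁-a₂)⁻¹)) ^ (1/β) *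
          (((π/2)/(α-1)) * (a₁ ^ (α-1) * a₁ * a₂ * (a₁-a₂)⁻¹)) ^ (1/α) := by
          apply mul_le_mul (Real.rpow_le_rpow hX0 hX (by positivity))
            (Real.rpow_le_rpow hY0 hY (by positivity))
            (Real.rpow_nonneg hY0 _) (Real.rpow_nonneg (by positivity) _)
      _ = ((π/2)/(β-1)) ^ (1/β) * ((π/2)/(α-1)) ^ (1/α) * (a₁ * (a₁-a₂)⁻¹) :=
          case2_alg α β _ _ a₁ a₂ (a₁-a₂) hα0 hβ0 hsum (by positivity) (by positivity) ha1 h2 hs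
      _ ≤ 2 * (((π/2)/(β-1)) ^ (1/β) * ((π/2)/(α-1)) ^ (1/α)) := by
          have h7 : a₁ * (a₁-a₂)⁻¹ ≤ 2 := by
            rw [mul_inv_le_iff₀ hs]; linarith
          have hK : 0 ≤ ((π/2)/(β-1)) ^ (1/β) * ((π/2)/(α-1)) ^ (1/α) := by positivity
          nlinarith
      _ ≤ _ := le_max_right _ _
end

section
/- Let n ≥ 2, k an integer with 1 ≤ k ≤ n−1, and k < β < k+1. There is a constant C(n,β) such that for all positive reals a_1 ≥ ... ≥ a_{n+1} with consecutive ratios a_i/a_{i+1} ≥ √2, S(β; a_1,...,a_{n+1}) ≤ C(n,β)·a_1^{−1}⋯a_k^{−1}·a_{k+1}^{−β+k}, where S is the first-octant spherical integral of r_{D^{-1}}^β. -/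
open Real MeasureTheory Set

/-- `S β a` is the spherical-coordinates expression for the integral over the first
octant of `S^n` of the `β`-th power of the radial function of the rhombus with
vertices `±(1/aᵢ)eᵢ`:
`S(β; a₁,…,a_{n+1}) = ∫_{[0,π/2]^n} sin^{n−1}θ₁ ⋯ sin θ_{n−1}
  / (a₁ cos θ₁ + a₂ sin θ₁ cos θ₂ + ⋯ + a_{n+1} sin θ₁ ⋯ sin θ_n)^β dθ₁⋯dθ_n`. -/
noncomputable def S (n : ℕ) (β : ℝ) (a : Fin (n+1) → ℝ) : ℝ :=
  ∫ θ in Set.univ.pi (fun _ : Fin n => Set.Icc 0 (π/2)),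
    (∏ j : Fin n, Real.sin (θ j) ^ (n - 1 - (j : ℕ))) /
      (∑ i : Fin (n+1),
        a i * (∏ j : Fin n, if (j : ℕ) < (i : ℕ) then Real.sin (θ j) else 1) *
          (if h : (i : ℕ) < n then Real.cos (θ ⟨i, h⟩) else 1)) ^ β

open scoped ENNReal

noncomputable def cube (m : ℕ) : Set (Fin m → ℝ) := Set.univ.pi fun _ : Fin m => Set.Icc 0 (π/2)

noncomputable def Numer (m : ℕ) (θ : Fin m → ℝ) : ℝ :=
  ∏ j : Fin m, Real.sin (θ j) ^ (m - 1 - (j : ℕ))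

noncomputable def Denom (m : ℕ) (a : Fin (m+1) → ℝ) (θ : Fin m → ℝ) : ℝ :=
  ∑ i : Fin (m+1),
    a i * (∏ j : Fin m, if (j : ℕ) < (i : ℕ) then Real.sin (θ j) else 1) *
      (if h : (i : ℕ) < m then Real.cos (θ ⟨i, h⟩) else 1)

noncomputable def L (m : ℕ) (γ : ℝ) (a : Fin (m+1) → ℝ) : ℝ≥0∞ :=
  ∫⁻ θ in cube m, ENNReal.ofReal (Numer m θ / Denom m a θ ^ γ)

lemma Numer_succ (m : ℕ) (θ : Fin (m+1) → ℝ) :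
    Numer (m+1) θ = Real.sin (θ 0) ^ m * Numer m (θ ∘ Fin.succ) := by
  rw [Numer, Fin.prod_univ_succ]
  have h1 : (m + 1 - 1 - ((0 : Fin (m+1)) : ℕ)) = m := by simp
  rw [h1, Numer]
  congr 1
  apply Finset.prod_congr rfl
  intro j _
  simp only [Fin.val_succ, Function.comp_apply]
  congr 1
  omega

lemma Denom_succ (m : ℕ) (a : Fin (m+2) → ℝ) (θ : Fin (m+1) → ℝ) :
    Denom (m+1) a θ = a 0 * Real.cos (θ 0)
      + Real.sin (θ 0) * Denom m (a ∘ Fin.succ) (θ ∘ Fin.succ) := by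
  rw [Denom, Fin.sum_univ_succ]
  congr 1
  · simp
  · rw [Denom, Finset.mul_sum]
    apply Finset.sum_congr rfl
    intro i _
    rw [Fin.prod_univ_succ]
    simp only [Fin.val_succ, Function.comp_apply, Fin.val_zero]
    simp only [show (0:ℕ) < (i:ℕ)+1 from Nat.succ_pos _, ↓reduceIte]
    have hprod : (∏ j : Fin m, if (j : ℕ) + 1 < (i : ℕ) + 1 then Real.sin (θ j.succ) else 1)
        = ∏ j : Fin m, if (j : ℕ) < (i : ℕ) then Real.sin (θ j.succ) else 1 := by
      apply Finset.prod_congr rfl; intro j _; congr 1; simp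
    rw [hprod]
    have hcos : (if h : (i : ℕ) + 1 < m + 1 then Real.cos (θ ⟨(i:ℕ)+1, h⟩) else 1)
        = (if h : (i : ℕ) < m then Real.cos (θ (Fin.succ ⟨i, h⟩)) else 1) := by
      by_cases h : (i : ℕ) < m
      · rw [dif_pos (by omega : (i:ℕ)+1 < m+1), dif_pos h]
        congr 1
      · rw [dif_neg (by omega), dif_neg h]
    rw [hcos]
    ring

lemma mem_cube {m : ℕ} {θ : Fin m → ℝ} (h : θ ∈ cube m) (j : Fin m) :
    0 ≤ θ j ∧ θ j ≤ π/2 := by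
  have := h j (Set.mem_univ j); exact ⟨this.1, this.2⟩

lemma tail_mem_cube {m : ℕ} {θ : Fin (m+1) → ℝ} (h : θ ∈ cube (m+1)) :
    (θ ∘ Fin.succ) ∈ cube m := by
  intro j _; exact h j.succ (Set.mem_univ _)

lemma sin_mem {m : ℕ} {θ : Fin m → ℝ} (h : θ ∈ cube m) (j : Fin m) :
    0 ≤ Real.sin (θ j) ∧ Real.sin (θ j) ≤ 1 := by
  obtain ⟨h0, h1⟩ := mem_cube h j
  exact ⟨Real.sin_nonneg_of_nonneg_of_le_pi h0 (by linarith [pi_pos]), Real.sin_le_one _⟩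

lemma cos_mem {m : ℕ} {θ : Fin m → ℝ} (h : θ ∈ cube m) (j : Fin m) :
    0 ≤ Real.cos (θ j) ∧ Real.cos (θ j) ≤ 1 := by
  obtain ⟨h0, h1⟩ := mem_cube h j
  exact ⟨Real.cos_nonneg_of_mem_Icc ⟨by linarith [pi_pos], h1⟩, Real.cos_le_one _⟩

lemma Numer_nonneg {m : ℕ} {θ : Fin m → ℝ} (h : θ ∈ cube m) : 0 ≤ Numer m θ :=
  Finset.prod_nonneg fun j _ => pow_nonneg (sin_mem h j).1 _

lemma Numer_le_one {m : ℕ} {θ : Fin m → ℝ} (h : θ ∈ cube m) : Numer m θ ≤ 1 :=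
  Finset.prod_le_one (fun j _ => pow_nonneg (sin_mem h j).1 _)
    (fun j _ => pow_le_one₀ (sin_mem h j).1 (sin_mem h j).2)

lemma Denom_pos : ∀ (m : ℕ) (a : Fin (m+1) → ℝ), (∀ i, 0 < a i) →
    ∀ θ ∈ cube m, 0 < Denom m a θ := by
  intro m
  induction m with
  | zero =>
    intro a ha θ _
    simp [Denom]
    exact ha 0
  | succ m ih =>
    intro a ha θ hθ
    rw [Denom_succ]
    have h0 := mem_cube hθ 0
    have hsin := sin_mem hθ 0
    have hcos := cos_mem hθ 0
    have htail : 0 < Denom m (a ∘ Fin.succ) (θ ∘ Fin.succ) :=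
      ih (a ∘ Fin.succ) (fun i => ha i.succ) _ (tail_mem_cube hθ)
    rcases lt_or_ge (θ 0) (π/2) with hlt | hge
    · have : 0 < Real.cos (θ 0) :=
        Real.cos_pos_of_mem_Ioo ⟨by linarith [pi_pos, h0.1], hlt⟩
      have := mul_pos (ha 0) this
      nlinarith [mul_nonneg hsin.1 htail.le]
    · have hθ0 : θ 0 = π/2 := le_antisymm h0.2 hge
      rw [hθ0]
      simp [Real.cos_pi_div_two, Real.sin_pi_div_two]
      nlinarith [mul_nonneg (ha 0).le hcos.1]

lemma Denom_le : ∀ (m : ℕ) (a : Fin (m+1) → ℝ), (∀ i, 0 < a i) → Antitone a →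
    ∀ θ ∈ cube m, Denom m a θ ≤ (m+1) * a 0 := by
  intro m
  induction m with
  | zero =>
    intro a ha hmono θ _
    simp [Denom]
  | succ m ih =>
    intro a ha hmono θ hθ
    rw [Denom_succ]
    have hsin := sin_mem hθ 0
    have hcos := cos_mem hθ 0
    have htail_pos : 0 < Denom m (a ∘ Fin.succ) (θ ∘ Fin.succ) :=
      Denom_pos m _ (fun i => ha i.succ) _ (tail_mem_cube hθ)
    have htail : Denom m (a ∘ Fin.succ) (θ ∘ Fin.succ) ≤ (m+1) * (a ∘ Fin.succ) 0 :=
      ih (a ∘ Fin.succ) (fun i => ha i.succ)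
        (hmono.comp_monotone (Fin.strictMono_succ.monotone)) _ (tail_mem_cube hθ)
    have ha1 : a (Fin.succ 0) ≤ a 0 := hmono (Fin.zero_le _)
    have h1 : a 0 * Real.cos (θ 0) ≤ a 0 := by nlinarith [ha 0]
    have h2 : Real.sin (θ 0) * Denom m (a ∘ Fin.succ) (θ ∘ Fin.succ)
        ≤ (m+1) * a 0 := by
      calc Real.sin (θ 0) * Denom m (a ∘ Fin.succ) (θ ∘ Fin.succ)
          ≤ 1 * Denom m (a ∘ Fin.succ) (θ ∘ Fin.succ) :=
            mul_le_mul_of_nonneg_right hsin.2 htail_pos.le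
        _ = Denom m (a ∘ Fin.succ) (θ ∘ Fin.succ) := one_mul _
        _ ≤ (m+1) * (a ∘ Fin.succ) 0 := htail
        _ ≤ (m+1) * a 0 := by
            apply mul_le_mul_of_nonneg_left _ (by positivity)
            exact ha1
    push_cast
    linarith

lemma measurable_Numer (m : ℕ) : Measurable (Numer m) := by
  apply Finset.measurable_prod
  intro j _
  exact ((Real.measurable_sin.comp (measurable_pi_apply j)).pow_const _)

lemma measurable_Denom (m : ℕ) (a : Fin (m+1) → ℝ) : Measurable (Denom m a) := by
  apply Finset.measurable_sum
  intro i _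
  apply Measurable.mul
  · apply Measurable.mul measurable_const
    apply Finset.measurable_prod
    intro j _
    by_cases h : (j : ℕ) < (i : ℕ)
    · simp only [if_pos h]; exact Real.measurable_sin.comp (measurable_pi_apply j)
    · simp only [if_neg h]; exact measurable_const
  · by_cases h : (i : ℕ) < m
    · simp only [dif_pos h]; exact Real.measurable_cos.comp (measurable_pi_apply _)
    · simp only [dif_neg h]; exact measurable_const

lemma cube_preimage (m : ℕ) :
    (fun p : ℝ × (Fin m → ℝ) => Fin.cons p.1 p.2) ⁻¹' cube (m+1)
      = (Set.Icc 0 (π/2)) ×ˢ cube m := by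
  ext ⟨t, y⟩
  simp only [Set.mem_preimage, cube, Set.mem_pi, Set.mem_univ, forall_true_left,
    Set.mem_prod]
  constructor
  · intro h
    refine ⟨by simpa using h 0, fun j => by simpa using h j.succ⟩
  · rintro ⟨h0, h1⟩ j
    refine Fin.cases ?_ ?_ j
    · simpa using h0
    · intro j'; simpa using h1 j'

lemma peel (m : ℕ) (F : (Fin (m+1) → ℝ) → ℝ≥0∞) (hF : Measurable F) :
    ∫⁻ θ in cube (m+1), F θ
      = ∫⁻ y in cube m, ∫⁻ t in Set.Icc 0 (π/2), F (Fin.cons t y) := by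
  have hmp := (volume_preserving_piFinSuccAbove (fun _ : Fin (m+1) => ℝ) 0).symm
  have hemb := (MeasurableEquiv.piFinSuccAbove (fun _ : Fin (m+1) => ℝ) 0).symm.measurableEmbedding
  have key := hmp.setLIntegral_comp_preimage_emb hemb F (cube (m+1))
  have happ : ∀ p : ℝ × (Fin m → ℝ),
      (MeasurableEquiv.piFinSuccAbove (fun _ : Fin (m+1) => ℝ) 0).symm p
        = Fin.cons p.1 p.2 := by
    intro p
    simp only [MeasurableEquiv.piFinSuccAbove_symm_apply, Fin.insertNth_zero,
      Fin.insertNthEquiv_zero]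
    rfl
  rw [← key]
  have hpre : (MeasurableEquiv.piFinSuccAbove (fun _ : Fin (m+1) => ℝ) 0).symm ⁻¹' cube (m+1)
      = (Set.Icc 0 (π/2)) ×ˢ cube m := by
    rw [show ((MeasurableEquiv.piFinSuccAbove (fun _ : Fin (m+1) => ℝ) 0).symm : ℝ × (Fin m → ℝ) → (Fin (m+1) → ℝ)) = fun p => Fin.cons p.1 p.2 from funext happ]
    exact cube_preimage m
  rw [hpre, Measure.volume_eq_prod, ← Measure.prod_restrict]
  rw [MeasureTheory.lintegral_prod_symm'
    (fun p : ℝ × (Fin m → ℝ) => F ((MeasurableEquiv.piFinSuccAbove (fun _ : Fin (m+1) => ℝ) 0).symm p))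
    (hF.comp (MeasurableEquiv.piFinSuccAbove (fun _ : Fin (m+1) => ℝ) 0).symm.measurable)]
  apply lintegral_congr
  intro y
  apply lintegral_congr
  intro t
  rw [happ (t, y)]

lemma oneD_base (m : ℕ) (γ a b : ℝ) (h0 : 0 < γ) (h1 : γ < 1) (ha : 0 < a) (hb : 0 ≤ b) :
    ∫⁻ t in Set.Icc 0 (π/2),
        ENNReal.ofReal (Real.sin t ^ m / (a * Real.cos t + Real.sin t * b) ^ γ)
      ≤ ENNReal.ofReal ((2/π)^(-γ) * ((π/2)^(1-γ) / (1-γ)) * a^(-γ)) := by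
  have hπ := pi_pos
  set C : ℝ := a^(-γ) * (2/π)^(-γ) with hC
  have hCpos : 0 ≤ C := mul_nonneg (Real.rpow_nonneg ha.le _)
    (Real.rpow_nonneg (by positivity) _)
  set g : ℝ → ℝ := fun t => C * (π/2 - t)^(-γ) with hg
  rw [← Measure.restrict_congr_set Ico_ae_eq_Icc]
  have hle : ∀ t ∈ Set.Ico (0:ℝ) (π/2),
      ENNReal.ofReal (Real.sin t ^ m / (a * Real.cos t + Real.sin t * b) ^ γ)
        ≤ ENNReal.ofReal (g t) := by
    intro t ht
    obtain ⟨ht0, ht2⟩ := ht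
    apply ENNReal.ofReal_le_ofReal
    have hsub0 : 0 < π/2 - t := by linarith
    have hlow : 0 < a * ((2/π) * (π/2 - t)) := by positivity
    have hsint : 0 ≤ Real.sin t := Real.sin_nonneg_of_nonneg_of_le_pi ht0 (by linarith)
    have hd : a * ((2/π) * (π/2 - t)) ≤ a * Real.cos t + Real.sin t * b := by
      have hcos : (2/π) * (π/2 - t) ≤ Real.cos t := by
        have := Real.mul_le_sin (x := π/2 - t) (by linarith) (by linarith)
        rwa [Real.sin_pi_div_two_sub] at this
      nlinarith [mul_nonneg hsint hb]
    have hdpos : 0 < a * Real.cos t + Real.sin t * b := lt_of_lt_of_le hlow hd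
    calc Real.sin t ^ m / (a * Real.cos t + Real.sin t * b) ^ γ
        ≤ 1 / (a * Real.cos t + Real.sin t * b) ^ γ := by
          have hDγ : 0 < (a * Real.cos t + Real.sin t * b) ^ γ :=
            Real.rpow_pos_of_pos hdpos γ
          gcongr
          exact pow_le_one₀ hsint (Real.sin_le_one t)
      _ = (a * Real.cos t + Real.sin t * b) ^ (-γ) := by
          rw [Real.rpow_neg hdpos.le, one_div]
      _ ≤ (a * ((2/π) * (π/2 - t))) ^ (-γ) :=
          Real.rpow_le_rpow_of_nonpos hlow hd (by linarith)
      _ = g t := by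
          rw [Real.mul_rpow ha.le (by positivity), Real.mul_rpow (by positivity) hsub0.le]
          ring
  refine le_trans (setLIntegral_mono' measurableSet_Ico hle) ?_
  have hint : IntegrableOn g (Set.Ico 0 (π/2)) := by
    have h1 : IntervalIntegrable (fun u : ℝ => u ^ (-γ)) volume 0 (π/2) :=
      intervalIntegral.intervalIntegrable_rpow' (by linarith)
    have h2 := (h1.comp_sub_left (π/2)).symm
    simp only [sub_zero, sub_self] at h2
    have := (intervalIntegrable_iff_integrableOn_Ico_of_le (by linarith : (0:ℝ) ≤ π/2)).mp h2
    exact this.const_mul C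
  have hnn : 0 ≤ᵐ[volume.restrict (Set.Ico 0 (π/2))] g := by
    refine (ae_restrict_mem measurableSet_Ico).mono fun t ht => ?_
    have : (0:ℝ) ≤ (π/2 - t) ^ (-γ) := Real.rpow_nonneg (by linarith [ht.2]) _
    simp only [Pi.zero_apply, hg]
    positivity
  rw [← ofReal_integral_eq_lintegral_ofReal hint hnn]
  apply ENNReal.ofReal_le_ofReal
  have hval : ∫ t in Set.Ico (0:ℝ) (π/2), g t = C * ((π/2)^(1-γ)/(1-γ)) := by
    rw [MeasureTheory.integral_const_mul]
    congr 1
    rw [setIntegral_congr_set Ico_ae_eq_Ioc,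
      ← intervalIntegral.integral_of_le (by linarith : (0:ℝ) ≤ π/2)]
    have := intervalIntegral.integral_comp_sub_left (a := 0) (b := π/2)
      (fun u : ℝ => u ^ (-γ)) (π/2)
    simp only [sub_zero, sub_self] at this
    rw [this, integral_rpow (Or.inl (by linarith))]
    rw [Real.zero_rpow (by linarith : -γ + 1 ≠ 0)]
    ring_nf
  rw [hval]
  ring_nf
  exact le_of_eq (by rw [hC]; ring)

set_option maxHeartbeats 1000000 in
lemma sqrt2_facts : (1.4:ℝ) ≤ Real.sqrt 2 ∧ Real.sqrt 2 ≤ (1.5:ℝ) := by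
  have h := Real.sq_sqrt (by norm_num : (0:ℝ) ≤ 2)
  have h2 := Real.sqrt_nonneg 2
  constructor <;> nlinarith

set_option maxHeartbeats 2000000 in
lemma oneD_step (m : ℕ) (γ a b M : ℝ) (hγ : 1 < γ) (ha : 0 < a) (hb : 0 < b) (hM : b ≤ M * a) :
    ∫⁻ t in Set.Icc 0 (π/2),
        ENNReal.ofReal (Real.sin t ^ m / (a * Real.cos t + Real.sin t * b) ^ γ)
      ≤ ENNReal.ofReal
          ((π/4 * (Real.sqrt 2)^γ * M^(γ-1) + (π/2)^γ/(γ-1)) * (a⁻¹ * b^(1-γ))) := by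
  have hπ := pi_pos
  have hs2 : (0:ℝ) < Real.sqrt 2 := by nlinarith [sqrt2_facts.1]
  have hs2sq : Real.sqrt 2 * Real.sqrt 2 = 2 := Real.mul_self_sqrt (by norm_num)
  have hM0 : 0 < M := by nlinarith
  have hγ1 : γ - 1 ≠ 0 := by linarith
  have h2pi_rpow : ((2:ℝ)/π) ^ (-γ) = (π/2)^γ := by
    rw [show (2:ℝ)/π = (π/2)⁻¹ by rw [inv_div],
      Real.inv_rpow (by positivity), ← Real.rpow_neg (by positivity), neg_neg]
  set D : ℝ → ℝ := fun t => a * Real.cos t + Real.sin t * b with hD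
  have hcos_ge : ∀ t ∈ Set.Icc (0:ℝ) (π/4), Real.sqrt 2 / 2 ≤ Real.cos t := by
    intro t ⟨h0, h4⟩
    have := Real.cos_le_cos_of_nonneg_of_le_pi h0 (by linarith) h4
    rwa [Real.cos_pi_div_four] at this
  have hsin_ge : ∀ t ∈ Set.Icc (π/4) (π/2), Real.sqrt 2 / 2 ≤ Real.sin t := by
    intro t ⟨h4, h2⟩
    have := Real.sin_le_sin_of_le_of_le_pi_div_two (by linarith) h2 h4
    rwa [Real.sin_pi_div_four] at this
  have hDpos : ∀ t ∈ Set.Icc (0:ℝ) (π/2), 0 < D t := by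
    intro t ⟨h0, h2⟩
    have hsint : 0 ≤ Real.sin t := Real.sin_nonneg_of_nonneg_of_le_pi h0 (by linarith)
    simp only [hD]
    rcases le_or_gt t (π/4) with h4 | h4
    · have hc := hcos_ge t ⟨h0, h4⟩
      nlinarith [mul_nonneg hsint hb.le]
    · have hs := hsin_ge t ⟨h4.le, h2⟩
      have hcost : 0 ≤ Real.cos t := Real.cos_nonneg_of_mem_Icc ⟨by linarith, h2⟩
      nlinarith [mul_nonneg ha.le hcost]
  set f : ℝ → ℝ := fun t => Real.sin t ^ m / D t ^ γ with hf
  have hfc : ContinuousOn f (Set.Icc 0 (π/2)) := by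
    apply ContinuousOn.div
    · exact (continuous_sin.pow m).continuousOn
    · exact ContinuousOn.rpow_const
        ((continuous_const.mul continuous_cos).add
          (continuous_sin.mul continuous_const)).continuousOn
        (fun t ht => Or.inl (hDpos t ht).ne')
    · exact fun t ht => (Real.rpow_pos_of_pos (hDpos t ht) γ).ne'
  have hfnn : ∀ t ∈ Set.Icc (0:ℝ) (π/2), 0 ≤ f t := by
    intro t ht
    have hsint : 0 ≤ Real.sin t := Real.sin_nonneg_of_nonneg_of_le_pi ht.1 (by linarith [ht.2])
    exact div_nonneg (pow_nonneg hsint m) (Real.rpow_nonneg (hDpos t ht).le γ)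
  have hint : IntegrableOn f (Set.Icc 0 (π/2)) := hfc.integrableOn_Icc
  rw [← ofReal_integral_eq_lintegral_ofReal hint
    ((ae_restrict_mem measurableSet_Icc).mono fun t ht => hfnn t ht)]
  apply ENNReal.ofReal_le_ofReal
  rw [MeasureTheory.integral_Icc_eq_integral_Ioc,
    ← intervalIntegral.integral_of_le (by linarith : (0:ℝ) ≤ π/2)]
  have hi1 : IntervalIntegrable f volume 0 (π/4) := by
    apply ContinuousOn.intervalIntegrable
    apply hfc.mono
    rw [Set.uIcc_of_le (by linarith : (0:ℝ) ≤ π/4)]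
    exact Set.Icc_subset_Icc (le_refl _) (by linarith)
  have hi2 : IntervalIntegrable f volume (π/4) (π/2) := by
    apply ContinuousOn.intervalIntegrable
    apply hfc.mono
    rw [Set.uIcc_of_le (by linarith : π/4 ≤ π/2)]
    exact Set.Icc_subset_Icc (by linarith) (le_refl _)
  rw [← intervalIntegral.integral_add_adjacent_intervals hi1 hi2]
  -- Piece 1
  have hc1 : (0:ℝ) < a * (Real.sqrt 2 / 2) := by positivity
  have hpiece1 : ∫ t in (0:ℝ)..(π/4), f t ≤ (π/4) * (a * (Real.sqrt 2 / 2)) ^ (-γ) := by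
    have hmono : ∀ t ∈ Set.Icc (0:ℝ) (π/4), f t ≤ (a * (Real.sqrt 2 / 2)) ^ (-γ) := by
      intro t ⟨h0, h4⟩
      have hsint : 0 ≤ Real.sin t := Real.sin_nonneg_of_nonneg_of_le_pi h0 (by linarith)
      have hd : a * (Real.sqrt 2 / 2) ≤ D t := by
        simp only [hD]
        have hc := hcos_ge t ⟨h0, h4⟩
        nlinarith [mul_nonneg hsint hb.le]
      have hdpos : 0 < D t := lt_of_lt_of_le hc1 hd
      simp only [hf]
      calc Real.sin t ^ m / D t ^ γ ≤ 1 / D t ^ γ := by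
            have hDγ : 0 < D t ^ γ := Real.rpow_pos_of_pos hdpos γ
            gcongr
            exact pow_le_one₀ hsint (Real.sin_le_one t)
        _ = D t ^ (-γ) := by rw [Real.rpow_neg hdpos.le, one_div]
        _ ≤ (a * (Real.sqrt 2 / 2)) ^ (-γ) :=
            Real.rpow_le_rpow_of_nonpos hc1 hd (by linarith)
    calc ∫ t in (0:ℝ)..(π/4), f t
        ≤ ∫ _ in (0:ℝ)..(π/4), (a * (Real.sqrt 2 / 2)) ^ (-γ) :=
          intervalIntegral.integral_mono_on (by linarith) hi1
            intervalIntegrable_const hmono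
      _ = (π/4) * (a * (Real.sqrt 2 / 2)) ^ (-γ) := by
          rw [intervalIntegral.integral_const, smul_eq_mul, sub_zero]
  have hc1bound : (a * (Real.sqrt 2 / 2)) ^ (-γ)
      ≤ (Real.sqrt 2)^γ * M^(γ-1) * (a⁻¹ * b^(1-γ)) := by
    have e0 : (a * (Real.sqrt 2 / 2)) ^ (-γ) = a^(-γ) * (Real.sqrt 2)^γ := by
      rw [Real.mul_rpow ha.le (by positivity)]
      congr 1
      rw [show Real.sqrt 2 / 2 = (Real.sqrt 2)⁻¹ by
        rw [inv_eq_one_div, div_eq_div_iff (by norm_num : (2:ℝ) ≠ 0) hs2.ne', hs2sq]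
        norm_num]
      rw [Real.inv_rpow hs2.le, ← Real.rpow_neg hs2.le, neg_neg]
    have e1 : (M*a)^(1-γ) ≤ b^(1-γ) :=
      Real.rpow_le_rpow_of_nonpos hb hM (by linarith)
    have e2 : (M*a)^(1-γ) = M^(1-γ) * a^(1-γ) := Real.mul_rpow hM0.le ha.le
    have hMM : M^(γ-1) * M^(1-γ) = 1 := by
      rw [← Real.rpow_add hM0, show (γ-1)+(1-γ) = 0 by ring, Real.rpow_zero]
    have haa : a^(-1:ℝ) * a^(1-γ) = a^(-γ) := by
      rw [← Real.rpow_add ha]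
      congr 1
      ring
    have e3 : M^(γ-1) * (a⁻¹ * (M^(1-γ) * a^(1-γ))) = a^(-γ) := by
      rw [show (a:ℝ)⁻¹ = a^(-1:ℝ) from (Real.rpow_neg_one a).symm]
      calc M^(γ-1) * (a^(-1:ℝ) * (M^(1-γ) * a^(1-γ)))
          = (M^(γ-1) * M^(1-γ)) * (a^(-1:ℝ) * a^(1-γ)) := by ring
        _ = 1 * a^(-γ) := by rw [hMM, haa]
        _ = a^(-γ) := one_mul _
    have h1 : 0 ≤ (Real.sqrt 2:ℝ)^γ := Real.rpow_nonneg hs2.le _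
    have h2 : 0 ≤ M^(γ-1) := Real.rpow_nonneg hM0.le _
    have h3 : 0 ≤ (a:ℝ)⁻¹ := inv_nonneg.2 ha.le
    calc (a * (Real.sqrt 2 / 2)) ^ (-γ) = a^(-γ) * (Real.sqrt 2)^γ := e0
      _ = (Real.sqrt 2)^γ * (M^(γ-1) * (a⁻¹ * (M^(1-γ) * a^(1-γ)))) := by rw [e3]; ring
      _ ≤ (Real.sqrt 2)^γ * (M^(γ-1) * (a⁻¹ * b^(1-γ))) := by
          apply mul_le_mul_of_nonneg_left _ h1
          apply mul_le_mul_of_nonneg_left _ h2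
          apply mul_le_mul_of_nonneg_left _ h3
          rw [← e2]; exact e1
      _ = (Real.sqrt 2)^γ * M^(γ-1) * (a⁻¹ * b^(1-γ)) := by ring
  -- Piece 2
  set u : ℝ → ℝ := fun t => a * (π/2 - t) + b with hu
  have hupos : ∀ t ∈ Set.Icc (π/4) (π/2), 0 < u t := by
    intro t ⟨_, h2⟩
    have : 0 ≤ a * (π/2 - t) := mul_nonneg ha.le (by linarith)
    simp only [hu]; linarith
  set g : ℝ → ℝ := fun t => u t ^ (-γ) with hg
  have hgi : IntervalIntegrable g volume (π/4) (π/2) := by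
    apply ContinuousOn.intervalIntegrable
    apply ContinuousOn.rpow_const
      ((continuous_const.mul (continuous_const.sub continuous_id)).add
        continuous_const).continuousOn
    intro t ht
    rw [Set.uIcc_of_le (by linarith : π/4 ≤ π/2)] at ht
    exact Or.inl (hupos t ht).ne'
  have hpiece2 : ∫ t in (π/4)..(π/2), f t ≤ (π/2)^γ * (b^(1-γ) / (a * (γ-1))) := by
    have h2pi : (2:ℝ)/π ≤ Real.sqrt 2 / 2 := by
      rw [div_le_div_iff₀ hπ (by norm_num)]
      nlinarith [sqrt2_facts.1, pi_gt_three]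
    have hmono : ∀ t ∈ Set.Icc (π/4) (π/2), f t ≤ (π/2)^γ * g t := by
      intro t ⟨h4, h2⟩
      have h0 : (0:ℝ) ≤ t := by linarith
      have hsint := hsin_ge t ⟨h4, h2⟩
      have hsint' : 0 ≤ Real.sin t := by nlinarith
      have hcos : (2/π) * (π/2 - t) ≤ Real.cos t := by
        have := Real.mul_le_sin (x := π/2 - t) (by linarith) (by linarith)
        rwa [Real.sin_pi_div_two_sub] at this
      have hut : 0 < u t := hupos t ⟨h4, h2⟩
      have hlow : (0:ℝ) < (2/π) * u t := by positivity
      have hd : (2/π) * u t ≤ D t := by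
        simp only [hu, hD]
        have hsb : (2/π) * b ≤ Real.sin t * b := by nlinarith
        have hca : a * ((2/π) * (π/2 - t)) ≤ a * Real.cos t := by nlinarith
        nlinarith
      have hdpos : 0 < D t := lt_of_lt_of_le hlow hd
      simp only [hf, hg]
      calc Real.sin t ^ m / D t ^ γ ≤ 1 / D t ^ γ := by
            have hDγ : 0 < D t ^ γ := Real.rpow_pos_of_pos hdpos γ
            gcongr
            exact pow_le_one₀ hsint' (Real.sin_le_one t)
        _ = D t ^ (-γ) := by rw [Real.rpow_neg hdpos.le, one_div]
        _ ≤ ((2/π) * u t) ^ (-γ) :=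
            Real.rpow_le_rpow_of_nonpos hlow hd (by linarith)
        _ = (π/2)^γ * u t ^ (-γ) := by
            rw [Real.mul_rpow (by positivity) hut.le, h2pi_rpow]
    have hgint : ∫ t in (π/4)..(π/2), g t ≤ b^(1-γ) / (a * (γ-1)) := by
      set H : ℝ → ℝ := fun t => u t ^ (1-γ) / (a * (γ-1)) with hH
      have hderiv : ∀ t ∈ Set.uIcc (π/4) (π/2), HasDerivAt H (g t) t := by
        intro t ht
        rw [Set.uIcc_of_le (by linarith : π/4 ≤ π/2)] at ht
        have hut : 0 < u t := hupos t ht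
        have hu' : HasDerivAt u (-a) t := by
          have h1 : HasDerivAt (fun s : ℝ => π/2 - s) (-1) t :=
            (hasDerivAt_id t).const_sub (π/2)
          have h2 := (h1.const_mul a).add_const b
          have : a * (-1) = -a := by ring
          rw [this] at h2
          exact h2
        have hr := (hu'.rpow_const (p := 1-γ) (Or.inl hut.ne')).div_const (a * (γ-1))
        have hgt : g t = -a * (1-γ) * u t ^ (1-γ-1) / (a * (γ-1)) := by
          simp only [hg]
          rw [show (1:ℝ)-γ-1 = -γ by ring]
          field_simp
          ring
        rw [hgt]
        exact hr
      have heq := intervalIntegral.integral_eq_sub_of_hasDerivAt hderiv hgi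
      rw [heq]
      have hu2 : u (π/2) = b := by simp only [hu]; norm_num
      have hu4 : u (π/4) = a * (π/4) + b := by simp only [hu]; ring_nf
      simp only [hH]
      rw [hu2, hu4]
      have hnn : 0 ≤ (a * (π/4) + b)^(1-γ) := Real.rpow_nonneg (by positivity) _
      have hden : 0 < a * (γ-1) := by nlinarith
      have : 0 ≤ (a * (π/4) + b)^(1-γ) / (a * (γ-1)) := div_nonneg hnn hden.le
      linarith
    calc ∫ t in (π/4)..(π/2), f t
        ≤ ∫ t in (π/4)..(π/2), (π/2)^γ * g t :=
          intervalIntegral.integral_mono_on (by linarith) hi2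
            (hgi.const_mul _) hmono
      _ = (π/2)^γ * ∫ t in (π/4)..(π/2), g t := by
          rw [intervalIntegral.integral_const_mul]
      _ ≤ (π/2)^γ * (b^(1-γ) / (a * (γ-1))) := by
          have h1 : (0:ℝ) ≤ (π/2)^γ := Real.rpow_nonneg (by positivity) _
          exact mul_le_mul_of_nonneg_left hgint h1
  have h2 : (π/2)^γ * (b^(1-γ) / (a * (γ-1))) = (π/2)^γ/(γ-1) * (a⁻¹ * b^(1-γ)) := by
    field_simp
  calc (∫ t in (0:ℝ)..(π/4), f t) + ∫ t in (π/4)..(π/2), f t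
      ≤ (π/4) * (a * (Real.sqrt 2 / 2)) ^ (-γ) + (π/2)^γ * (b^(1-γ) / (a * (γ-1))) := by
        linarith
    _ ≤ (π/4) * ((Real.sqrt 2)^γ * M^(γ-1) * (a⁻¹ * b^(1-γ)))
          + (π/2)^γ/(γ-1) * (a⁻¹ * b^(1-γ)) := by
        rw [← h2]
        have : (0:ℝ) ≤ π/4 := by linarith
        have := mul_le_mul_of_nonneg_left hc1bound this
        linarith
    _ = (π/4 * (Real.sqrt 2)^γ * M^(γ-1) + (π/2)^γ/(γ-1)) * (a⁻¹ * b^(1-γ)) := by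
        ring

lemma measurable_cube (m : ℕ) : MeasurableSet (cube m) :=
  MeasurableSet.univ_pi fun _ => measurableSet_Icc

lemma measurable_integrand (m : ℕ) (γ : ℝ) (hγ : 0 ≤ γ) (a : Fin (m+1) → ℝ) :
    Measurable (fun θ : Fin m → ℝ => ENNReal.ofReal (Numer m θ / Denom m a θ ^ γ)) := by
  apply Measurable.ennreal_ofReal
  exact (measurable_Numer m).div
    ((Real.continuous_rpow_const hγ).measurable.comp (measurable_Denom m a))

lemma L_step (m : ℕ) (γ : ℝ) (hγ : 1 < γ) (a : Fin (m+2) → ℝ) (ha : ∀ i, 0 < a i)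
    (hmono : Antitone a) :
    L (m+1) γ a
      ≤ ENNReal.ofReal ((π/4 * (Real.sqrt 2)^γ * ((m+1:ℕ):ℝ)^(γ-1) + (π/2)^γ/(γ-1)) * (a 0)⁻¹)
        * L m (γ-1) (a ∘ Fin.succ) := by
  have hπ := pi_pos
  set Cγ : ℝ := π/4 * (Real.sqrt 2)^γ * ((m+1:ℕ):ℝ)^(γ-1) + (π/2)^γ/(γ-1) with hCγ
  have hCγ0 : 0 ≤ Cγ := by
    have h1 : (0:ℝ) ≤ π/4 * (Real.sqrt 2)^γ * ((m+1:ℕ):ℝ)^(γ-1) := by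
      have := Real.rpow_nonneg (Real.sqrt_nonneg 2) γ
      have := Real.rpow_nonneg (by positivity : (0:ℝ) ≤ ((m+1:ℕ):ℝ)) (γ-1)
      positivity
    have h2 : (0:ℝ) ≤ (π/2)^γ/(γ-1) := by
      apply div_nonneg (Real.rpow_nonneg (by positivity) _) (by linarith)
    rw [hCγ]
    linarith
  rw [L, peel m _ (measurable_integrand (m+1) γ (by linarith) a)]
  have key : ∀ y ∈ cube m,
      (∫⁻ t in Set.Icc 0 (π/2),
        ENNReal.ofReal (Numer (m+1) (Fin.cons t y) / Denom (m+1) a (Fin.cons t y) ^ γ))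
      ≤ ENNReal.ofReal (Cγ * (a 0)⁻¹)
          * ENNReal.ofReal (Numer m y / Denom m (a ∘ Fin.succ) y ^ (γ-1)) := by
    intro y hy
    set b : ℝ := Denom m (a ∘ Fin.succ) y with hb
    have hbpos : 0 < b := Denom_pos m _ (fun i => ha i.succ) y hy
    have hble : b ≤ ((m+1:ℕ):ℝ) * a 0 := by
      have h1 := Denom_le m (a ∘ Fin.succ) (fun i => ha i.succ)
        (hmono.comp_monotone (Fin.strictMono_succ.monotone)) y hy
      have h2 : a (Fin.succ 0) ≤ a 0 := hmono (Fin.zero_le _)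
      have : ((m:ℕ):ℝ) + 1 = ((m+1:ℕ):ℝ) := by push_cast; ring
      calc b ≤ (m+1) * (a ∘ Fin.succ) 0 := h1
        _ = ((m+1:ℕ):ℝ) * a (Fin.succ 0) := by push_cast; rfl
        _ ≤ ((m+1:ℕ):ℝ) * a 0 := by
            apply mul_le_mul_of_nonneg_left h2 (by positivity)
    have hNnn : 0 ≤ Numer m y := Numer_nonneg hy
    have hrw : ∀ t : ℝ,
        ENNReal.ofReal (Numer (m+1) (Fin.cons t y) / Denom (m+1) a (Fin.cons t y) ^ γ)
          = ENNReal.ofReal (Numer m y)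
            * ENNReal.ofReal (Real.sin t ^ m / (a 0 * Real.cos t + Real.sin t * b) ^ γ) := by
      intro t
      have htail : (Fin.cons t y ∘ Fin.succ) = y := funext fun j => by simp
      have h1 : Numer (m+1) (Fin.cons t y) = Real.sin t ^ m * Numer m y := by
        rw [Numer_succ, htail, Fin.cons_zero]
      have h2 : Denom (m+1) a (Fin.cons t y) = a 0 * Real.cos t + Real.sin t * b := by
        rw [Denom_succ, htail]
        simp only [Fin.cons_zero, hb]
      rw [h1, h2, ← ENNReal.ofReal_mul hNnn]
      congr 1
      ring
    calc ∫⁻ t in Set.Icc 0 (π/2),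
          ENNReal.ofReal (Numer (m+1) (Fin.cons t y) / Denom (m+1) a (Fin.cons t y) ^ γ)
        = ∫⁻ t in Set.Icc 0 (π/2), ENNReal.ofReal (Numer m y)
            * ENNReal.ofReal (Real.sin t ^ m / (a 0 * Real.cos t + Real.sin t * b) ^ γ) :=
          lintegral_congr fun t => hrw t
      _ = ENNReal.ofReal (Numer m y) * ∫⁻ t in Set.Icc 0 (π/2),
            ENNReal.ofReal (Real.sin t ^ m / (a 0 * Real.cos t + Real.sin t * b) ^ γ) :=
          lintegral_const_mul' _ _ ENNReal.ofReal_ne_top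
      _ ≤ ENNReal.ofReal (Numer m y) * ENNReal.ofReal (Cγ * ((a 0)⁻¹ * b^(1-γ))) := by
          apply mul_le_mul_right
          exact oneD_step m γ (a 0) b _ hγ (ha 0) hbpos hble
      _ = ENNReal.ofReal (Cγ * (a 0)⁻¹)
            * ENNReal.ofReal (Numer m y / Denom m (a ∘ Fin.succ) y ^ (γ-1)) := by
          rw [← ENNReal.ofReal_mul hNnn, ← ENNReal.ofReal_mul (mul_nonneg hCγ0 (inv_nonneg.2 (ha 0).le))]
          congr 1
          have : b^(1-γ) = (b^(γ-1))⁻¹ := by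
            rw [show (1:ℝ)-γ = -(γ-1) by ring, Real.rpow_neg hbpos.le]
          rw [← hb, this]
          rw [div_eq_mul_inv]
          ring
  calc ∫⁻ y in cube m, ∫⁻ t in Set.Icc 0 (π/2),
        ENNReal.ofReal (Numer (m+1) (Fin.cons t y) / Denom (m+1) a (Fin.cons t y) ^ γ)
      ≤ ∫⁻ y in cube m, ENNReal.ofReal (Cγ * (a 0)⁻¹)
          * ENNReal.ofReal (Numer m y / Denom m (a ∘ Fin.succ) y ^ (γ-1)) :=
        setLIntegral_mono' (measurable_cube m) key
    _ = ENNReal.ofReal (Cγ * (a 0)⁻¹) * L m (γ-1) (a ∘ Fin.succ) := by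
        rw [L]
        exact lintegral_const_mul' _ _ ENNReal.ofReal_ne_top

lemma L_base (m : ℕ) (γ : ℝ) (h0 : 0 < γ) (h1 : γ < 1) (a : Fin (m+2) → ℝ)
    (ha : ∀ i, 0 < a i) :
    L (m+1) γ a
      ≤ ENNReal.ofReal ((π/2)^m * ((2/π)^(-γ) * ((π/2)^(1-γ)/(1-γ)) * (a 0)^(-γ))) := by
  have hπ := pi_pos
  set K : ℝ := (2/π)^(-γ) * ((π/2)^(1-γ)/(1-γ)) * (a 0)^(-γ) with hK
  have hK0 : 0 ≤ K := by
    have k1 : (0:ℝ) ≤ (2/π)^(-γ) := Real.rpow_nonneg (by positivity) _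
    have k2 : (0:ℝ) ≤ (π/2)^(1-γ) := Real.rpow_nonneg (by positivity) _
    have k3 : (0:ℝ) ≤ (a 0)^(-γ) := Real.rpow_nonneg (ha 0).le _
    have k4 : (0:ℝ) ≤ (π/2)^(1-γ)/(1-γ) := div_nonneg k2 (by linarith)
    positivity
  rw [L, peel m _ (measurable_integrand (m+1) γ (by linarith) a)]
  have key : ∀ y ∈ cube m,
      (∫⁻ t in Set.Icc 0 (π/2),
        ENNReal.ofReal (Numer (m+1) (Fin.cons t y) / Denom (m+1) a (Fin.cons t y) ^ γ))
      ≤ ENNReal.ofReal K := by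
    intro y hy
    set b : ℝ := Denom m (a ∘ Fin.succ) y with hb
    have hbpos : 0 < b := Denom_pos m _ (fun i => ha i.succ) y hy
    have hNnn : 0 ≤ Numer m y := Numer_nonneg hy
    have hrw : ∀ t : ℝ,
        ENNReal.ofReal (Numer (m+1) (Fin.cons t y) / Denom (m+1) a (Fin.cons t y) ^ γ)
          = ENNReal.ofReal (Numer m y)
            * ENNReal.ofReal (Real.sin t ^ m / (a 0 * Real.cos t + Real.sin t * b) ^ γ) := by
      intro t
      have htail : (Fin.cons t y ∘ Fin.succ) = y := funext fun j => by simp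
      have hh1 : Numer (m+1) (Fin.cons t y) = Real.sin t ^ m * Numer m y := by
        rw [Numer_succ, htail, Fin.cons_zero]
      have hh2 : Denom (m+1) a (Fin.cons t y) = a 0 * Real.cos t + Real.sin t * b := by
        rw [Denom_succ, htail]
        simp only [Fin.cons_zero, hb]
      rw [hh1, hh2, ← ENNReal.ofReal_mul hNnn]
      congr 1
      ring
    calc ∫⁻ t in Set.Icc 0 (π/2),
          ENNReal.ofReal (Numer (m+1) (Fin.cons t y) / Denom (m+1) a (Fin.cons t y) ^ γ)
        = ∫⁻ t in Set.Icc 0 (π/2), ENNReal.ofReal (Numer m y)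
            * ENNReal.ofReal (Real.sin t ^ m / (a 0 * Real.cos t + Real.sin t * b) ^ γ) :=
          lintegral_congr fun t => hrw t
      _ = ENNReal.ofReal (Numer m y) * ∫⁻ t in Set.Icc 0 (π/2),
            ENNReal.ofReal (Real.sin t ^ m / (a 0 * Real.cos t + Real.sin t * b) ^ γ) :=
          lintegral_const_mul' _ _ ENNReal.ofReal_ne_top
      _ ≤ 1 * ENNReal.ofReal K := by
          apply mul_le_mul'
          · exact ENNReal.ofReal_le_one.2 (Numer_le_one hy)
          · rw [hK]
            exact oneD_base m γ (a 0) b h0 h1 (ha 0) hbpos.le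
      _ = ENNReal.ofReal K := one_mul _
  calc ∫⁻ y in cube m, ∫⁻ t in Set.Icc 0 (π/2),
        ENNReal.ofReal (Numer (m+1) (Fin.cons t y) / Denom (m+1) a (Fin.cons t y) ^ γ)
      ≤ ∫⁻ _ in cube m, ENNReal.ofReal K := setLIntegral_mono' (measurable_cube m) key
    _ = ENNReal.ofReal K * volume (cube m) := setLIntegral_const _ _
    _ = ENNReal.ofReal K * ENNReal.ofReal ((π/2)^m) := by
        congr 1
        rw [cube, volume_pi_pi]
        simp only [Real.volume_Icc, sub_zero]
        rw [Finset.prod_const, Finset.card_univ, Fintype.card_fin,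
          ← ENNReal.ofReal_pow (by positivity)]
    _ = ENNReal.ofReal ((π/2)^m * K) := by
        rw [← ENNReal.ofReal_mul hK0]
        rw [mul_comm]
    _ = ENNReal.ofReal ((π/2)^m * ((2/π)^(-γ) * ((π/2)^(1-γ)/(1-γ)) * (a 0)^(-γ))) := by rw [hK]

lemma key_induction (k : ℕ) : ∀ (m : ℕ) (γ : ℝ), (k:ℝ) < γ → γ < (k:ℝ)+1 →
    ∀ (hkm : k+1 ≤ m),
    ∃ C : ℝ, 0 ≤ C ∧ ∀ a : Fin (m+1) → ℝ, (∀ i, 0 < a i) → Antitone a →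
      L m γ a ≤ ENNReal.ofReal (C * (∏ i : Fin k, (a (Fin.castLE (by omega) i))⁻¹)
        * (a ⟨k, by omega⟩) ^ ((k:ℝ) - γ)) := by
  induction k with
  | zero =>
    intro m γ hγ0 hγ1 hkm
    obtain ⟨m', rfl⟩ : ∃ m', m = m'+1 := ⟨m-1, by omega⟩
    push_cast at hγ0 hγ1
    refine ⟨(π/2)^m' * ((2/π)^(-γ) * ((π/2)^(1-γ)/(1-γ))), ?_, ?_⟩
    · have hπ := pi_pos
      have k1 : (0:ℝ) ≤ (2/π)^(-γ) := Real.rpow_nonneg (by positivity) _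
      have k2 : (0:ℝ) ≤ (π/2)^(1-γ)/(1-γ) :=
        div_nonneg (Real.rpow_nonneg (by positivity) _) (by linarith)
      positivity
    · intro a hpos hanti
      have hb := L_base m' γ hγ0 (by linarith) a hpos
      refine le_trans hb (le_of_eq ?_)
      congr 1
      rw [Finset.univ_eq_empty, Finset.prod_empty,
        show ((0:ℕ):ℝ) - γ = -γ by push_cast; ring,
        show (⟨0, by omega⟩ : Fin (m'+2)) = 0 from rfl]
      ring
  | succ k ih =>
    intro m γ hγ0 hγ1 hkm
    obtain ⟨m', rfl⟩ : ∃ m', m = m'+1 := ⟨m-1, by omega⟩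
    have hm'k : k+1 ≤ m' := by omega
    have hγ0' : (k:ℝ) < γ - 1 := by push_cast at hγ0; linarith
    have hγ1' : γ - 1 < (k:ℝ)+1 := by push_cast at hγ1; linarith
    obtain ⟨C', hC'0, hC'⟩ := ih m' (γ-1) hγ0' hγ1' hm'k
    have hγgt1 : 1 < γ := by
      have : (0:ℝ) ≤ (k:ℝ) := Nat.cast_nonneg k
      push_cast at hγ0; linarith
    set Cs : ℝ := π/4 * (Real.sqrt 2)^γ * ((m'+1:ℕ):ℝ)^(γ-1) + (π/2)^γ/(γ-1) with hCs
    have hCs0 : 0 ≤ Cs := by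
      have hπ := pi_pos
      have c1 : (0:ℝ) ≤ (Real.sqrt 2)^γ := Real.rpow_nonneg (Real.sqrt_nonneg 2) _
      have c2 : (0:ℝ) ≤ ((m'+1:ℕ):ℝ)^(γ-1) := Real.rpow_nonneg (by positivity) _
      have c3 : (0:ℝ) ≤ (π/2)^γ/(γ-1) :=
        div_nonneg (Real.rpow_nonneg (by positivity) _) (by linarith)
      rw [hCs]
      positivity
    refine ⟨Cs * C', mul_nonneg hCs0 hC'0, ?_⟩
    intro a hpos hanti
    have htailpos : ∀ i, 0 < (a ∘ Fin.succ) i := fun i => hpos i.succ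
    have htailmono : Antitone (a ∘ Fin.succ) :=
      hanti.comp_monotone (Fin.strictMono_succ.monotone)
    calc L (m'+1) γ a
        ≤ ENNReal.ofReal (Cs * (a 0)⁻¹) * L m' (γ-1) (a ∘ Fin.succ) :=
          L_step m' γ hγgt1 a hpos hanti
      _ ≤ ENNReal.ofReal (Cs * (a 0)⁻¹)
            * ENNReal.ofReal (C' * (∏ i : Fin k, ((a ∘ Fin.succ) (Fin.castLE (by omega) i))⁻¹)
              * ((a ∘ Fin.succ) ⟨k, by omega⟩) ^ ((k:ℝ) - (γ-1))) :=
          mul_le_mul_right (hC' (a ∘ Fin.succ) htailpos htailmono) _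
      _ = ENNReal.ofReal ((Cs * C') * (∏ i : Fin (k+1), (a (Fin.castLE (by omega) i))⁻¹)
            * (a ⟨k+1, by omega⟩) ^ (((k+1:ℕ):ℝ) - γ)) := by
          rw [← ENNReal.ofReal_mul (mul_nonneg hCs0 (inv_nonneg.2 (hpos 0).le))]
          congr 1
          have hP : (∏ i : Fin (k+1), (a (Fin.castLE (by omega : k+1 ≤ m'+2) i))⁻¹)
              = (a 0)⁻¹ * ∏ i : Fin k, ((a ∘ Fin.succ) (Fin.castLE (by omega : k ≤ m'+1) i))⁻¹ := by
            rw [Fin.prod_univ_succ]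
            exact congrArg₂ (· * ·) rfl (Finset.prod_congr rfl fun i _ => rfl)
          have hQ : ((a ∘ Fin.succ) ⟨k, by omega⟩ : ℝ) = a ⟨k+1, by omega⟩ := rfl
          have hE : (k:ℝ) - (γ-1) = ((k+1:ℕ):ℝ) - γ := by push_cast; ring
          rw [hP, hQ, hE]
          ring


theorem S_bound_k_lt_beta_lt_k_add_one (n : ℕ) (hn : 2 ≤ n) (k : ℕ)
    (hk1 : 1 ≤ k) (hk2 : k ≤ n - 1) (β : ℝ) (hkβ : (k : ℝ) < β) (hβk : β < (k : ℝ) + 1) :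
    ∃ C : ℝ, ∀ a : Fin (n+1) → ℝ, (∀ i, 0 < a i) → Antitone a →
      (∀ i : Fin n, Real.sqrt 2 * a i.succ ≤ a i.castSucc) →
      S n β a ≤ C * (∏ i : Fin k, (a (Fin.castLE (by omega) i))⁻¹) *
        a ⟨k, by omega⟩ ^ ((k : ℝ) - β) := by
  obtain ⟨C, hC0, hC⟩ := key_induction k n β hkβ hβk (by omega)
  refine ⟨C, ?_⟩
  intro a hpos hanti _hsqrt
  have hRHS0 : 0 ≤ C * (∏ i : Fin k, (a (Fin.castLE (by omega) i))⁻¹)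
      * a ⟨k, by omega⟩ ^ ((k : ℝ) - β) := by
    apply mul_nonneg (mul_nonneg hC0 ?_) (Real.rpow_nonneg (hpos _).le _)
    exact Finset.prod_nonneg fun i _ => inv_nonneg.2 (hpos _).le
  have hSdef : S n β a = ∫ θ in cube n, Numer n θ / Denom n a θ ^ β := rfl
  by_cases hint : IntegrableOn (fun θ => Numer n θ / Denom n a θ ^ β) (cube n) volume
  · have hnn : 0 ≤ᵐ[volume.restrict (cube n)]
        (fun θ => Numer n θ / Denom n a θ ^ β) := by
      refine (ae_restrict_mem (measurable_cube n)).mono fun θ hθ => ?_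
      exact div_nonneg (Numer_nonneg hθ)
        (Real.rpow_nonneg (Denom_pos n a hpos θ hθ).le _)
    have heq : S n β a = (L n β a).toReal := by
      rw [hSdef, MeasureTheory.integral_eq_lintegral_of_nonneg_ae hnn
        hint.aestronglyMeasurable]
      rfl
    rw [heq]
    calc (L n β a).toReal
        ≤ (ENNReal.ofReal (C * (∏ i : Fin k, (a (Fin.castLE (by omega) i))⁻¹)
            * a ⟨k, by omega⟩ ^ ((k : ℝ) - β))).toReal :=
          ENNReal.toReal_mono ENNReal.ofReal_ne_top (hC a hpos hanti)
      _ = _ := ENNReal.toReal_ofReal hRHS0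
  · rw [hSdef, MeasureTheory.integral_undef hint]
    exact hRHS0
end
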